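/- Let ν ∈ (0,1), let ι be a finite index set with |ι| ≥ 2, fix a horizon L ≥ 1, and let V_k : (ι → ℝ) → ℝ for k = 0,…,L be defined by the backward Bellman recursion: V_L(m) = max_{x∈ι} exp(m[x])/Σ_{l∈ι} exp(m[l]) and, for 0 ≤ k < L, V_k(m) = max_{a∈ι} q_k(m,a) with q_k(m,a) = ∫₀^∞ V_{k+1}( m + J(y)·δ_a ) · f(y|m,a) dy (assume all these integrals exist). Then for every 0 ≤ k ≤ L−1, every m : ι → ℝ, and every a ∈ ι: q_k(m,a) ≥ ( ξ(a;m) + exp( ( min over ordered pairs of distinct indices (x_i,x_j) of ( m[x_i] − ν·m[x_j] ) ) / (1−ν) ) · h(ν) · Σ_{n=1}^{L−k−1} g(ν)^n ) / Σ_{l∈ι} exp(m[l]). -/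

import Mathlib

open Real MeasureTheory Finset

set_option linter.unusedSectionVars false

noncomputable section

variable {ι : Type*} [Fintype ι] [DecidableEq ι]

/-- The log-likelihood update function `J(y) = (1-ν)y + ln ν`. -/
def Jfun (ν y : ℝ) : ℝ := (1 - ν) * y + Real.log ν

/-- `h(ν) = exp(ν ln ν/(1-ν)) - exp(ln ν/(1-ν))`. -/
def hfun (ν : ℝ) : ℝ :=
  Real.exp (ν * Real.log ν / (1 - ν)) - Real.exp (Real.log ν / (1 - ν))

/-- `g(ν) = exp(ln ν/(1-ν)) (1/(ν+1) - ln ν/(1-ν))`. -/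
def gfun (ν : ℝ) : ℝ :=
  Real.exp (Real.log ν / (1 - ν)) * (1 / (ν + 1) - Real.log ν / (1 - ν))

/-- Kronecker delta `δ[a,x]` as a real number. -/
def kdelta (a x : ι) : ℝ := if x = a then 1 else 0

theorem univ_nonempty_of_card (hcard : 2 ≤ Fintype.card ι) :
    (Finset.univ : Finset ι).Nonempty := by
  rw [← Finset.card_pos]
  have : (Finset.univ : Finset ι).card = Fintype.card ι := rfl
  omega

theorem erase_nonempty_of_card (hcard : 2 ≤ Fintype.card ι) (a : ι) :
    ((Finset.univ : Finset ι).erase a).Nonempty := by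
  rw [← Finset.card_pos, Finset.card_erase_of_mem (Finset.mem_univ a)]
  have : (Finset.univ : Finset ι).card = Fintype.card ι := rfl
  omega

theorem pairs_nonempty_of_card (hcard : 2 ≤ Fintype.card ι) :
    ((Finset.univ : Finset (ι × ι)).filter fun p => p.1 ≠ p.2).Nonempty := by
  obtain ⟨a, b, hab⟩ := Fintype.exists_pair_of_one_lt_card (α := ι) (by omega)
  exact ⟨(a, b), by simp [hab]⟩

/-- `max_{â ≠ a} m[â]`. -/
def maxOther (hcard : 2 ≤ Fintype.card ι) (m : ι → ℝ) (a : ι) : ℝ :=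
  ((Finset.univ : Finset ι).erase a).sup' (erase_nonempty_of_card hcard a) m

/-- `ξ(a; m)`. -/
def xi (ν : ℝ) (hcard : 2 ≤ Fintype.card ι) (m : ι → ℝ) (a : ι) : ℝ :=
  if maxOther hcard m a - m a < Real.log ν then Real.exp (m a)
  else Real.exp (maxOther hcard m a)
    + hfun ν * Real.exp ((m a - ν * maxOther hcard m a) / (1 - ν))

/-- `min_{x_i ≠ x_j} (m[x_i] - ν m[x_j])`, over ordered pairs of distinct indices. -/
def minPair (ν : ℝ) (hcard : 2 ≤ Fintype.card ι) (m : ι → ℝ) : ℝ :=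
  (((Finset.univ : Finset (ι × ι)).filter fun p => p.1 ≠ p.2).inf'
    (pairs_nonempty_of_card hcard)) (fun p => m p.1 - ν * m p.2)

/-- The feedback density `f(y | m, a) = b[a] ν e^{-νy} + (1-b[a]) e^{-y}`. -/
def fdens (ν : ℝ) (m : ι → ℝ) (a : ι) (y : ℝ) : ℝ :=
  (Real.exp (m a) / ∑ l, Real.exp (m l)) * (ν * Real.exp (-ν * y))
    + (1 - Real.exp (m a) / ∑ l, Real.exp (m l)) * Real.exp (-y)

/-- Terminal value `V_L(m) = max_x exp(m[x]) / ∑_l exp(m[l])`. -/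
def Vterm (hcard : 2 ≤ Fintype.card ι) (m : ι → ℝ) : ℝ :=
  ((Finset.univ : Finset ι).sup' (univ_nonempty_of_card hcard) fun x => Real.exp (m x))
    / ∑ l, Real.exp (m l)


open Filter in
lemma intIoi_exp (b : ℝ) (hb : 0 < b) (c : ℝ) :
    ∫ y in Set.Ioi c, Real.exp (-(b*y)) = Real.exp (-(b*c))/b := by
  have key : ∫ y in Set.Ioi c, Real.exp (-(b*y))
      = 0 - (-(Real.exp (-(b*c))/b)) := by
    apply integral_Ioi_of_hasDerivAt_of_tendsto
    · exact (Continuous.continuousWithinAt (by continuity))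
    · intro x _
      have h1 : HasDerivAt (fun y : ℝ => -(b*y)) (-b) x := by
        exact (((hasDerivAt_id x).const_mul b).neg).congr_deriv (by simp)
      have h2 := (h1.exp.div_const b).neg
      convert h2 using 1
      · rfl
      · rw [mul_neg, neg_div, neg_neg, mul_div_assoc, div_self hb.ne', mul_one]
    · simpa [neg_mul] using exp_neg_integrableOn_Ioi c hb
    · have h3 : Tendsto (fun y : ℝ => -(b*y)) atTop atBot := by
        have := tendsto_neg_atBot_iff.mpr (tendsto_id.const_mul_atTop hb)
        simpa using this
      have h4 : Tendsto (fun y : ℝ => Real.exp (-(b*y))) atTop (nhds 0) :=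
        Real.tendsto_exp_atBot.comp h3
      have h5 := (h4.div_const b).neg
      convert h5 using 2
      norm_num
  rw [key]; ring

lemma intIoc_exp (c : ℝ) (hc : c ≠ 0) (a b : ℝ) (hab : a ≤ b) :
    ∫ y in Set.Ioc a b, Real.exp (c*y) = (Real.exp (c*b) - Real.exp (c*a))/c := by
  rw [← intervalIntegral.integral_of_le hab]
  have : ∫ y in a..b, Real.exp (c*y)
      = Real.exp (c*b)/c - Real.exp (c*a)/c := by
    apply intervalIntegral.integral_eq_sub_of_hasDerivAt
    · intro x _
      have h1 : HasDerivAt (fun y : ℝ => c*y) c x := by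
        simpa using (hasDerivAt_id x).const_mul c
      have h2 := h1.exp.div_const c
      exact h2.congr_deriv (by rw [mul_div_assoc, div_self hc, mul_one])
    · exact (Continuous.intervalIntegrable (by continuity) a b)
  rw [this]; ring

section
variable {ν : ℝ} (hν0 : 0 < ν) (hν1 : ν < 1)
include hν0 hν1

lemma integrable_base (M μ c : ℝ) :
    IntegrableOn
      (fun y => max (Real.exp M) (Real.exp (μ + Real.log ν + (1-ν)*y)) * Real.exp (-y))
      (Set.Ioi c) := by
  have hg : IntegrableOn
      (fun y => Real.exp M * Real.exp (-(1*y)) + Real.exp (μ + Real.log ν) * Real.exp (-(ν*y)))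
      (Set.Ioi c) := by
    apply Integrable.add
    · simpa [neg_mul] using (exp_neg_integrableOn_Ioi c one_pos).const_mul (Real.exp M)
    · simpa [neg_mul] using (exp_neg_integrableOn_Ioi c hν0).const_mul (Real.exp (μ + Real.log ν))
  have hcont : Continuous
      (fun y => max (Real.exp M) (Real.exp (μ + Real.log ν + (1-ν)*y)) * Real.exp (-y)) :=
    (continuous_const.max (by continuity)).mul (by continuity)
  apply hg.mono' (hcont.aestronglyMeasurable.restrict)
  filter_upwards with y
  have h1 : (0:ℝ) ≤ max (Real.exp M) (Real.exp (μ + Real.log ν + (1-ν)*y)) :=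
    le_trans (Real.exp_pos M).le (le_max_left _ _)
  rw [Real.norm_eq_abs, abs_of_nonneg (mul_nonneg h1 (Real.exp_pos _).le)]
  have h2 : max (Real.exp M) (Real.exp (μ + Real.log ν + (1-ν)*y))
      ≤ Real.exp M + Real.exp (μ + Real.log ν + (1-ν)*y) :=
    max_le (le_add_of_nonneg_right (Real.exp_pos _).le) (le_add_of_nonneg_left (Real.exp_pos _).le)
  have h3 : Real.exp (μ + Real.log ν + (1-ν)*y) * Real.exp (-y)
      = Real.exp (μ + Real.log ν) * Real.exp (-(ν*y)) := by
    rw [← Real.exp_add, ← Real.exp_add]; ring_nf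
  calc max (Real.exp M) (Real.exp (μ + Real.log ν + (1-ν)*y)) * Real.exp (-y)
      ≤ (Real.exp M + Real.exp (μ + Real.log ν + (1-ν)*y)) * Real.exp (-y) :=
        mul_le_mul_of_nonneg_right h2 (Real.exp_pos _).le
    _ = Real.exp M * Real.exp (-(1*y)) + Real.exp (μ + Real.log ν) * Real.exp (-(ν*y)) := by
        rw [add_mul, h3]; norm_num

lemma int_base (M μ : ℝ) :
    ∫ y in Set.Ioi (0:ℝ),
      max (Real.exp M) (Real.exp (μ + Real.log ν + (1-ν)*y)) * Real.exp (-y)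
    = if M - μ < Real.log ν then Real.exp μ
      else Real.exp M + (Real.exp (ν * Real.log ν / (1-ν)) - Real.exp (Real.log ν / (1-ν)))
        * Real.exp ((μ - ν*M)/(1-ν)) := by
  have hne : (1:ℝ) - ν ≠ 0 := by linarith
  have h1ν : (0:ℝ) < 1 - ν := by linarith
  set y₀ := (M - μ - Real.log ν)/(1-ν) with hy₀
  by_cases hlt : M - μ < Real.log ν
  · rw [if_pos hlt]
    have heq : Set.EqOn
        (fun y => max (Real.exp M) (Real.exp (μ + Real.log ν + (1-ν)*y)) * Real.exp (-y))
        (fun y => Real.exp (μ + Real.log ν) * Real.exp (-(ν*y))) (Set.Ioi 0) := by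
      intro y hy
      have hy' : (0:ℝ) < y := hy
      have : Real.exp M ≤ Real.exp (μ + Real.log ν + (1-ν)*y) :=
        Real.exp_le_exp.mpr (by nlinarith)
      simp only [max_eq_right this]
      rw [← Real.exp_add, ← Real.exp_add]; ring_nf
    rw [setIntegral_congr_fun measurableSet_Ioi heq, integral_const_mul,
      intIoi_exp ν hν0 0, Real.exp_add, Real.exp_log hν0]
    field_simp
    simp
  · rw [if_neg hlt]
    push_neg at hlt
    have hy0 : (0:ℝ) ≤ y₀ := div_nonneg (by linarith) (by linarith)
    rw [← Set.Ioc_union_Ioi_eq_Ioi hy0,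
      setIntegral_union (Set.Ioc_disjoint_Ioi le_rfl) measurableSet_Ioi
        ((integrable_base hν0 hν1 M μ 0).mono_set Set.Ioc_subset_Ioi_self)
        (integrable_base hν0 hν1 M μ y₀)]
    have heq1 : Set.EqOn
        (fun y => max (Real.exp M) (Real.exp (μ + Real.log ν + (1-ν)*y)) * Real.exp (-y))
        (fun y => Real.exp M * Real.exp ((-1)*y)) (Set.Ioc 0 y₀) := by
      intro y hy
      have hy' : y ≤ y₀ := hy.2
      have : Real.exp (μ + Real.log ν + (1-ν)*y) ≤ Real.exp M := by
        apply Real.exp_le_exp.mpr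
        rw [hy₀, le_div_iff₀ h1ν] at hy'
        nlinarith
      simp only [max_eq_left this]
      congr 1; ring
    have heq2 : Set.EqOn
        (fun y => max (Real.exp M) (Real.exp (μ + Real.log ν + (1-ν)*y)) * Real.exp (-y))
        (fun y => Real.exp (μ + Real.log ν) * Real.exp (-(ν*y))) (Set.Ioi y₀) := by
      intro y hy
      have hy' : y₀ < y := hy
      have : Real.exp M ≤ Real.exp (μ + Real.log ν + (1-ν)*y) := by
        apply Real.exp_le_exp.mpr
        rw [hy₀, div_lt_iff₀ h1ν] at hy'
        nlinarith
      simp only [max_eq_right this]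
      rw [← Real.exp_add, ← Real.exp_add]; ring_nf
    rw [setIntegral_congr_fun measurableSet_Ioc heq1,
      setIntegral_congr_fun measurableSet_Ioi heq2,
      integral_const_mul, integral_const_mul,
      intIoc_exp (-1) (by norm_num) 0 y₀ hy0, intIoi_exp ν hν0 y₀]
    simp only [neg_one_mul, neg_zero, Real.exp_zero]
    have hexpμ : Real.exp (μ + Real.log ν) = Real.exp μ * ν := by
      rw [Real.exp_add, Real.exp_log hν0]
    have e1 : Real.exp μ * Real.exp (-(ν*y₀))
        = Real.exp (ν * Real.log ν/(1-ν)) * Real.exp ((μ - ν*M)/(1-ν)) := by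
      rw [← Real.exp_add, ← Real.exp_add]
      congr 1
      rw [hy₀]; field_simp; ring
    have e2 : Real.exp M * Real.exp (-y₀)
        = Real.exp (Real.log ν/(1-ν)) * Real.exp ((μ - ν*M)/(1-ν)) := by
      rw [← Real.exp_add, ← Real.exp_add]
      congr 1
      rw [hy₀]; field_simp; ring
    have hν' : ν ≠ 0 := ne_of_gt hν0
    have hc : Real.exp μ * ν * (Real.exp (-(ν*y₀))/ν) = Real.exp μ * Real.exp (-(ν*y₀)) := by
      field_simp
    rw [hexpμ, hc]
    linear_combination e1 - e2

end

section
variable {ν : ℝ} (hν0 : 0 < ν) (hν1 : ν < 1)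
include hν0 hν1

lemma hfun_pos' : 0 < Real.exp (ν * Real.log ν / (1 - ν)) - Real.exp (Real.log ν / (1 - ν)) := by
  have hl : Real.log ν < 0 := Real.log_neg hν0 hν1
  have : Real.log ν / (1-ν) < ν * Real.log ν / (1-ν) := by
    apply div_lt_div_of_pos_right ?_ (by linarith)
    nlinarith
  simpa using sub_pos.mpr (Real.exp_lt_exp.mpr this)

lemma gfun_pos' : 0 < Real.exp (Real.log ν / (1 - ν)) * (1 / (ν + 1) - Real.log ν / (1 - ν)) := by
  have hl : Real.log ν < 0 := Real.log_neg hν0 hν1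
  have h1 : (0:ℝ) < 1/(ν+1) := by positivity
  have h2 : Real.log ν / (1-ν) < 0 := div_neg_of_neg_of_pos hl (by linarith)
  exact mul_pos (Real.exp_pos _) (by linarith)

end

lemma min_neg_nonpos (ν x : ℝ) (hν0 : 0 < ν) : min x (-(ν*x)) ≤ 0 := by
  rcases le_or_gt 0 x with h | h
  · exact le_trans (min_le_right _ _) (by nlinarith)
  · exact le_trans (min_le_left _ _) h.le

section
variable {ν : ℝ} (hν0 : 0 < ν) (hν1 : ν < 1)
include hν0 hν1

lemma integrable_phi (c : ℝ) :
    IntegrableOn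
      (fun y => Real.exp (min ((1-ν)*y + Real.log ν) (-(ν*((1-ν)*y + Real.log ν))) / (1-ν))
        * Real.exp (-y)) (Set.Ioi c) := by
  have h1ν : (0:ℝ) < 1 - ν := by linarith
  have hg : IntegrableOn (fun y : ℝ => Real.exp (-y)) (Set.Ioi c) := by
    simpa [neg_mul] using exp_neg_integrableOn_Ioi c one_pos
  have hcont : Continuous
      (fun y => Real.exp (min ((1-ν)*y + Real.log ν) (-(ν*((1-ν)*y + Real.log ν))) / (1-ν))
        * Real.exp (-y)) := by
    apply Continuous.mul
    · apply Real.continuous_exp.comp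
      exact (((continuous_const.mul continuous_id).add continuous_const).min
        (continuous_const.mul ((continuous_const.mul continuous_id).add continuous_const)).neg).div_const _
    · continuity
  apply hg.mono' (hcont.aestronglyMeasurable.restrict)
  filter_upwards with y
  rw [Real.norm_eq_abs, abs_of_nonneg (by positivity)]
  have h2 : Real.exp (min ((1-ν)*y + Real.log ν) (-(ν*((1-ν)*y + Real.log ν))) / (1-ν)) ≤ 1 := by
    exact Real.exp_le_one_iff.mpr (div_nonpos_of_nonpos_of_nonneg (min_neg_nonpos ν _ hν0) h1ν.le)
  nlinarith [Real.exp_pos (-y)]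

lemma int_phi :
    ∫ y in Set.Ioi (0:ℝ),
      Real.exp (min ((1-ν)*y + Real.log ν) (-(ν*((1-ν)*y + Real.log ν))) / (1-ν))
        * Real.exp (-y)
    = Real.exp (Real.log ν/(1-ν)) * (1/(ν+1) - Real.log ν/(1-ν)) := by
  have h1ν : (0:ℝ) < 1 - ν := by linarith
  have hne : (1:ℝ) - ν ≠ 0 := ne_of_gt h1ν
  have hlog : Real.log ν < 0 := Real.log_neg hν0 hν1
  set y₁ := -Real.log ν/(1-ν) with hy₁
  have hy1 : (0:ℝ) ≤ y₁ := by
    rw [hy₁]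
    apply div_nonneg (by linarith) h1ν.le
  rw [← Set.Ioc_union_Ioi_eq_Ioi hy1,
    setIntegral_union (Set.Ioc_disjoint_Ioi le_rfl) measurableSet_Ioi
      ((integrable_phi hν0 hν1 0).mono_set Set.Ioc_subset_Ioi_self)
      (integrable_phi hν0 hν1 y₁)]
  have heq1 : Set.EqOn
      (fun y => Real.exp (min ((1-ν)*y + Real.log ν) (-(ν*((1-ν)*y + Real.log ν))) / (1-ν))
        * Real.exp (-y))
      (fun _ => Real.exp (Real.log ν/(1-ν))) (Set.Ioc 0 y₁) := by
    intro y hy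
    have hyle : y ≤ y₁ := hy.2
    have hJ : (1-ν)*y + Real.log ν ≤ 0 := by
      rw [hy₁, le_div_iff₀ h1ν] at hyle
      nlinarith
    have hmin : min ((1-ν)*y + Real.log ν) (-(ν*((1-ν)*y + Real.log ν)))
        = (1-ν)*y + Real.log ν := min_eq_left (by nlinarith)
    simp only [hmin]
    rw [← Real.exp_add]
    congr 1
    field_simp
    ring
  have heq2 : Set.EqOn
      (fun y => Real.exp (min ((1-ν)*y + Real.log ν) (-(ν*((1-ν)*y + Real.log ν))) / (1-ν))
        * Real.exp (-y))
      (fun y => Real.exp (-(ν*Real.log ν/(1-ν))) * Real.exp (-((1+ν)*y))) (Set.Ioi y₁) := by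
    intro y hy
    have hyge : y₁ < y := hy
    have hJ : 0 ≤ (1-ν)*y + Real.log ν := by
      rw [hy₁, div_lt_iff₀ h1ν] at hyge
      nlinarith
    have hmin : min ((1-ν)*y + Real.log ν) (-(ν*((1-ν)*y + Real.log ν)))
        = -(ν*((1-ν)*y + Real.log ν)) := min_eq_right (by nlinarith)
    simp only [hmin]
    rw [← Real.exp_add, ← Real.exp_add]
    congr 1
    field_simp
    ring
  rw [setIntegral_congr_fun measurableSet_Ioc heq1,
    setIntegral_congr_fun measurableSet_Ioi heq2,
    setIntegral_const, integral_const_mul, intIoi_exp (1+ν) (by linarith) y₁,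
    Real.volume_real_Ioc_of_le hy1, smul_eq_mul]
  have e1 : Real.exp (-(ν*Real.log ν/(1-ν))) * Real.exp (-((1+ν)*y₁))
      = Real.exp (Real.log ν/(1-ν)) := by
    rw [← Real.exp_add]
    congr 1
    rw [hy₁]
    field_simp
    ring
  have hval : Real.exp (-(ν*Real.log ν/(1-ν))) * (Real.exp (-((1+ν)*y₁))/(1+ν))
      = Real.exp (Real.log ν/(1-ν)) / (1+ν) := by
    rw [← e1]; ring
  rw [hval, hy₁]
  have hν1' : (0:ℝ) < 1 + ν := by linarith
  field_simp
  ring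
end

section
variable {ν : ℝ}

lemma sum_exp_pos (m : ι → ℝ) (hcard : 2 ≤ Fintype.card ι) :
    0 < ∑ l, Real.exp (m l) :=
  Finset.sum_pos (fun l _ => Real.exp_pos (m l)) (univ_nonempty_of_card hcard)

lemma exp_le_sum (m : ι → ℝ) (a : ι) :
    Real.exp (m a) ≤ ∑ l, Real.exp (m l) :=
  Finset.single_le_sum (fun l _ => (Real.exp_pos (m l)).le) (Finset.mem_univ a)

lemma fdens_nonneg (m : ι → ℝ) (a : ι) (y : ℝ) (hcard : 2 ≤ Fintype.card ι)
    (hν0 : 0 < ν) : 0 ≤ fdens ν m a y := by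
  have hS := sum_exp_pos m hcard
  have h1 : 0 ≤ Real.exp (m a) / ∑ l, Real.exp (m l) := by positivity
  have h2 : Real.exp (m a) / ∑ l, Real.exp (m l) ≤ 1 :=
    (div_le_one hS).mpr (exp_le_sum m a)
  have := Real.exp_pos (-ν * y)
  have := Real.exp_pos (-y)
  unfold fdens
  apply add_nonneg
  · exact mul_nonneg h1 (mul_nonneg hν0.le (Real.exp_pos _).le)
  · exact mul_nonneg (by linarith) (Real.exp_pos _).le

lemma exp_sup' (s : Finset ι) (hs : s.Nonempty) (m : ι → ℝ) :
    Real.exp (s.sup' hs m) = s.sup' hs (fun x => Real.exp (m x)) := by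
  rw [Finset.comp_sup'_eq_sup'_comp hs Real.exp (fun x y => Real.exp_monotone.map_max)]
  rfl

lemma sup'_split (hcard : 2 ≤ Fintype.card ι) (m : ι → ℝ) (a : ι) :
    (Finset.univ : Finset ι).sup' (univ_nonempty_of_card hcard) m
      = max (m a) (maxOther hcard m a) := by
  apply le_antisymm
  · apply Finset.sup'_le
    intro x hx
    by_cases hxa : x = a
    · subst hxa; exact le_max_left _ _
    · exact le_trans (Finset.le_sup' m (Finset.mem_erase.mpr ⟨hxa, Finset.mem_univ x⟩))
        (le_max_right _ _)
  · apply max_le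
    · exact Finset.le_sup' m (Finset.mem_univ a)
    · apply Finset.sup'_le
      intro x hx
      exact Finset.le_sup' m (Finset.mem_univ x)

/-- maxOther is the global sup when evaluated at an index not achieving ... -/
lemma minPair_le (hcard : 2 ≤ Fintype.card ι) (m : ι → ℝ) (x y : ι) (hxy : x ≠ y) :
    minPair ν hcard m ≤ m x - ν * m y := by
  exact Finset.inf'_le (b := (x, y)) (fun p : ι × ι => m p.1 - ν * m p.2) (by simp [hxy])

lemma le_minPair (hcard : 2 ≤ Fintype.card ι) (m : ι → ℝ) (c : ℝ)
    (h : ∀ x y : ι, x ≠ y → c ≤ m x - ν * m y) : c ≤ minPair ν hcard m := by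
  apply Finset.le_inf'
  intro p hp
  simp only [Finset.mem_filter, Finset.mem_univ, true_and] at hp
  exact h p.1 p.2 hp

/-- Key structural lemma: some arm's ξ dominates max + h · exp(minPair/(1-ν)). -/
lemma exists_xi_ge (hcard : 2 ≤ Fintype.card ι) (m : ι → ℝ) (hh : 0 ≤ hfun ν) (h1ν : 0 < 1 - ν)
    (hlog : Real.log ν < 0) :
    ∃ a' : ι, Real.exp ((Finset.univ : Finset ι).sup' (univ_nonempty_of_card hcard) m)
        + hfun ν * Real.exp (minPair ν hcard m / (1 - ν)) ≤ xi ν hcard m a' := by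
  obtain ⟨w, hw, hws⟩ := Finset.exists_mem_eq_sup' (univ_nonempty_of_card hcard) m
  obtain ⟨v, hv, hvs⟩ := Finset.exists_mem_eq_sup' (erase_nonempty_of_card hcard w) m
  have hvw : v ≠ w := (Finset.mem_erase.mp hv).1
  refine ⟨v, ?_⟩
  have hMv : maxOther hcard m v = m w := by
    apply le_antisymm
    · apply Finset.sup'_le
      intro x hx
      rw [← hws]
      exact Finset.le_sup' m (Finset.mem_univ x)
    · exact Finset.le_sup' m (Finset.mem_erase.mpr ⟨hvw.symm, Finset.mem_univ w⟩)
  have hvlew : m v ≤ m w := by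
    rw [← hws]; exact Finset.le_sup' m (Finset.mem_univ v)
  have hcond : ¬ (maxOther hcard m v - m v < Real.log ν) := by
    rw [hMv]; linarith
  rw [xi, if_neg hcond, hMv, ← hws]
  gcongr
  · rw [hws]
    exact minPair_le hcard m v w hvw

lemma minPair_update (hcard : 2 ≤ Fintype.card ι) (m : ι → ℝ) (a : ι) (y : ℝ)
    (hν0 : 0 < ν) :
    minPair ν hcard m + min (Jfun ν y) (-(ν * Jfun ν y))
      ≤ minPair ν hcard (fun x => m x + Jfun ν y * kdelta a x) := by
  apply le_minPair
  intro i j hij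
  have hbase := minPair_le (ν := ν) hcard m i j hij
  have hmin := min_neg_nonpos ν (Jfun ν y) hν0
  by_cases hia : i = a
  · have hja : j ≠ a := fun h => hij (hia.trans h.symm)
    have e1 : kdelta a i = (1:ℝ) := by simp [kdelta, hia]
    have e2 : kdelta a j = (0:ℝ) := by simp [kdelta, hja]
    rw [e1, e2]; simp only [mul_zero, mul_one, add_zero]
    have := min_le_left (Jfun ν y) (-(ν * Jfun ν y))
    linarith
  · by_cases hja : j = a
    · have e1 : kdelta a i = (0:ℝ) := by simp [kdelta, hia]
      have e2 : kdelta a j = (1:ℝ) := by simp [kdelta, hja]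
      rw [e1, e2]; simp only [mul_zero, mul_one, add_zero]
      have := min_le_right (Jfun ν y) (-(ν * Jfun ν y))
      nlinarith [this]
    · have e1 : kdelta a i = (0:ℝ) := by simp [kdelta, hia]
      have e2 : kdelta a j = (0:ℝ) := by simp [kdelta, hja]
      rw [e1, e2]; simp only [mul_zero, add_zero]
      linarith

lemma maxOther_update (hcard : 2 ≤ Fintype.card ι) (m : ι → ℝ) (a : ι) (c : ℝ) :
    maxOther hcard (fun x => m x + c * kdelta a x) a = maxOther hcard m a := by
  apply Finset.sup'_congr _ rfl
  intro x hx
  have hxa : x ≠ a := (Finset.mem_erase.mp hx).1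
  simp [kdelta, hxa]

lemma sum_exp_update (hν0 : 0 < ν) (m : ι → ℝ) (a : ι) (y : ℝ) :
    ∑ l, Real.exp (m l + Jfun ν y * kdelta a l)
      = (∑ l ∈ (Finset.univ : Finset ι).erase a, Real.exp (m l))
        + Real.exp (m a) * ν * Real.exp ((1-ν)*y) := by
  rw [← Finset.sum_erase_add _ _ (Finset.mem_univ a)]
  congr 1
  · apply Finset.sum_congr rfl
    intro x hx
    have hxa : x ≠ a := (Finset.mem_erase.mp hx).1
    simp [kdelta, hxa]
  · have hk : kdelta a a = (1:ℝ) := by simp [kdelta]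
    rw [hk, mul_one, Jfun,
      show m a + ((1-ν)*y + Real.log ν) = m a + Real.log ν + (1-ν)*y by ring,
      Real.exp_add, Real.exp_add, Real.exp_log hν0]

lemma fdens_eq (hν0 : 0 < ν) (hcard : 2 ≤ Fintype.card ι) (m : ι → ℝ) (a : ι) (y : ℝ) :
    fdens ν m a y = (∑ l, Real.exp (m l + Jfun ν y * kdelta a l)) * Real.exp (-y)
      / ∑ l, Real.exp (m l) := by
  have hS : 0 < ∑ l, Real.exp (m l) := sum_exp_pos m hcard
  have hsplit : ∑ l, Real.exp (m l)
      = (∑ l ∈ (Finset.univ : Finset ι).erase a, Real.exp (m l)) + Real.exp (m a) :=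
    (Finset.sum_erase_add _ _ (Finset.mem_univ a)).symm
  rw [sum_exp_update hν0 m a y, fdens]
  have hexp1 : Real.exp ((1-ν)*y) * Real.exp (-y) = Real.exp (-(ν*y)) := by
    rw [← Real.exp_add]; ring_nf
  field_simp
  rw [hsplit]
  have hexp1' : Real.exp (y*(1-ν)) = Real.exp ((1-ν)*y) := by rw [mul_comm]
  linear_combination (-(Real.exp (m a) * ν)) * hexp1 - (Real.exp (m a) * ν * Real.exp (-y)) * hexp1'

end


lemma geom_rec (g : ℝ) (N : ℕ) :
    ∑ n ∈ Finset.Icc 1 (N+1), g^n = g * (1 + ∑ n ∈ Finset.Icc 1 N, g^n) := by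
  induction N with
  | zero => simp
  | succ N ih =>
    have h2 : ∑ n ∈ Finset.Icc 1 (N+1), g^n = ∑ n ∈ Finset.Icc 1 N, g^n + g^(N+1) :=
      Finset.sum_Icc_succ_top (a:=1) (b:=N) (by omega) _
    calc ∑ n ∈ Finset.Icc 1 (N+1+1), g^n
        = ∑ n ∈ Finset.Icc 1 (N+1), g^n + g^(N+1+1) :=
          Finset.sum_Icc_succ_top (a:=1) (b:=N+1) (by omega) _
      _ = g * (1 + ∑ n ∈ Finset.Icc 1 N, g^n) + g^(N+1+1) := by rw [ih]
      _ = g * (1 + (∑ n ∈ Finset.Icc 1 N, g^n + g^(N+1))) := by ring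
      _ = g * (1 + ∑ n ∈ Finset.Icc 1 (N+1), g^n) := by rw [← h2]

section
variable {ν : ℝ}

lemma step_bound (hν0 : 0 < ν) (hν1 : ν < 1) (hcard : 2 ≤ Fintype.card ι)
    (W : (ι → ℝ) → ℝ) (c : ℝ) (hc : 0 ≤ c) (m : ι → ℝ) (a : ι)
    (hW : ∀ m' : ι → ℝ,
      (Real.exp ((Finset.univ : Finset ι).sup' (univ_nonempty_of_card hcard) m')
        + c * (hfun ν * Real.exp (minPair ν hcard m' / (1 - ν)))) / (∑ l, Real.exp (m' l))
        ≤ W m')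
    (hWint : MeasureTheory.IntegrableOn
      (fun y => W (fun x => m x + Jfun ν y * kdelta a x) * fdens ν m a y) (Set.Ioi (0:ℝ))) :
    (xi ν hcard m a + Real.exp (minPair ν hcard m / (1 - ν)) * hfun ν * (c * gfun ν))
      / ∑ l, Real.exp (m l)
    ≤ ∫ y in Set.Ioi (0:ℝ), W (fun x => m x + Jfun ν y * kdelta a x) * fdens ν m a y := by
  have h1ν : (0:ℝ) < 1 - ν := by linarith
  have hlog : Real.log ν < 0 := Real.log_neg hν0 hν1
  have hh : (0:ℝ) ≤ hfun ν := le_of_lt (hfun_pos' hν0 hν1)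
  have hS : 0 < ∑ l, Real.exp (m l) := sum_exp_pos m hcard
  have hSne : (∑ l, Real.exp (m l)) ≠ 0 := ne_of_gt hS
  have hint_base := integrable_base hν0 hν1 (maxOther hcard m a) (m a) 0
  have hint_phi := (integrable_phi hν0 hν1 0).const_mul
    (c * hfun ν * Real.exp (minPair ν hcard m / (1 - ν)))
  have hLBint : MeasureTheory.IntegrableOn (fun y =>
      (max (Real.exp (maxOther hcard m a)) (Real.exp (m a + Real.log ν + (1-ν)*y)) * Real.exp (-y)
        + c * hfun ν * Real.exp (minPair ν hcard m / (1 - ν)) *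
          (Real.exp (min ((1-ν)*y + Real.log ν) (-(ν*((1-ν)*y + Real.log ν))) / (1-ν))
            * Real.exp (-y))) / (∑ l, Real.exp (m l))) (Set.Ioi (0:ℝ)) :=
    (hint_base.add hint_phi).div_const _
  have hpt : ∀ y ∈ Set.Ioi (0:ℝ),
      (max (Real.exp (maxOther hcard m a)) (Real.exp (m a + Real.log ν + (1-ν)*y)) * Real.exp (-y)
        + c * hfun ν * Real.exp (minPair ν hcard m / (1 - ν)) *
          (Real.exp (min ((1-ν)*y + Real.log ν) (-(ν*((1-ν)*y + Real.log ν))) / (1-ν))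
            * Real.exp (-y))) / (∑ l, Real.exp (m l))
      ≤ W (fun x => m x + Jfun ν y * kdelta a x) * fdens ν m a y := by
    intro y _
    set m' := fun x => m x + Jfun ν y * kdelta a x with hm'
    have hS' : 0 < ∑ l, Real.exp (m' l) := sum_exp_pos m' hcard
    have hfd : fdens ν m a y = (∑ l, Real.exp (m' l)) * Real.exp (-y) / (∑ l, Real.exp (m l)) :=
      fdens_eq hν0 hcard m a y
    have hfd0 : 0 ≤ fdens ν m a y := fdens_nonneg m a y hcard hν0
    have step1 := mul_le_mul_of_nonneg_right (hW m') hfd0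
    have step2 : ((Real.exp ((Finset.univ : Finset ι).sup' (univ_nonempty_of_card hcard) m')
        + c * (hfun ν * Real.exp (minPair ν hcard m' / (1 - ν)))) / (∑ l, Real.exp (m' l)))
        * fdens ν m a y
        = (Real.exp ((Finset.univ : Finset ι).sup' (univ_nonempty_of_card hcard) m')
          + c * (hfun ν * Real.exp (minPair ν hcard m' / (1 - ν)))) * Real.exp (-y)
          / (∑ l, Real.exp (m l)) := by
      rw [hfd]
      field_simp
    rw [step2] at step1
    refine le_trans ?_ step1
    apply (div_le_div_iff_of_pos_right hS).mpr
    have key1 : Real.exp ((Finset.univ : Finset ι).sup' (univ_nonempty_of_card hcard) m')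
        = max (Real.exp (maxOther hcard m a)) (Real.exp (m a + Real.log ν + (1-ν)*y)) := by
      rw [sup'_split hcard m' a, Real.exp_monotone.map_max, maxOther_update hcard m a (Jfun ν y),
        max_comm]
      congr 2
      show m a + Jfun ν y * kdelta a a = m a + Real.log ν + (1-ν)*y
      simp [kdelta, Jfun]
      ring
    have key2 : Real.exp (minPair ν hcard m / (1 - ν))
        * Real.exp (min ((1-ν)*y + Real.log ν) (-(ν*((1-ν)*y + Real.log ν))) / (1-ν))
        ≤ Real.exp (minPair ν hcard m' / (1-ν)) := by
      have hJd : ((1-ν)*y + Real.log ν) = Jfun ν y := rfl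
      rw [hJd, ← Real.exp_add, ← add_div]
      apply Real.exp_le_exp.mpr
      exact div_le_div_of_nonneg_right (minPair_update hcard m a y hν0) h1ν.le
    have key3 := mul_le_mul_of_nonneg_right
      (mul_le_mul_of_nonneg_left key2 (mul_nonneg hc hh)) (Real.exp_pos (-y)).le
    rw [key1]
    nlinarith [key3]
  have hmono := MeasureTheory.setIntegral_mono_on hLBint hWint measurableSet_Ioi hpt
  refine le_trans (le_of_eq ?_) hmono
  rw [MeasureTheory.integral_div, MeasureTheory.integral_add hint_base hint_phi,
    integral_const_mul, int_base hν0 hν1 (maxOther hcard m a) (m a), int_phi hν0 hν1]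
  simp only [xi, hfun, gfun]
  ring_nf
end


/-- lower bound on the Q-function (Theorem 1 of the paper, lower bound). -/
theorem Qfun_lower_bound
    (ν : ℝ) (hν : ν ∈ Set.Ioo (0:ℝ) 1)
    (hcard : 2 ≤ Fintype.card ι)
    (L : ℕ) (hL : 1 ≤ L)
    (V : ℕ → (ι → ℝ) → ℝ) (q : ℕ → (ι → ℝ) → ι → ℝ)
    (hVL : ∀ m : ι → ℝ, V L m = Vterm hcard m)
    (hq : ∀ k, k < L → ∀ (m : ι → ℝ) (a : ι),
      q k m a = ∫ y in Set.Ioi (0:ℝ),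
        V (k + 1) (fun x => m x + Jfun ν y * kdelta a x) * fdens ν m a y)
    (hV : ∀ k, k < L → ∀ m : ι → ℝ,
      V k m = (Finset.univ : Finset ι).sup' (univ_nonempty_of_card hcard) (q k m))
    (hint : ∀ k, k < L → ∀ (m : ι → ℝ) (a : ι),
      MeasureTheory.IntegrableOn
        (fun y => V (k + 1) (fun x => m x + Jfun ν y * kdelta a x) * fdens ν m a y)
        (Set.Ioi (0:ℝ))) :
    ∀ k, k ≤ L - 1 → ∀ (m : ι → ℝ) (a : ι),
      q k m a ≥
        (xi ν hcard m a
          + Real.exp (minPair ν hcard m / (1 - ν)) * hfun ν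
            * ∑ n ∈ Finset.Icc 1 (L - k - 1), gfun ν ^ n)
          / ∑ l, Real.exp (m l) := by
  obtain ⟨hν0, hν1⟩ := hν
  have h1ν : (0:ℝ) < 1 - ν := by linarith
  have hlog : Real.log ν < 0 := Real.log_neg hν0 hν1
  have hh : (0:ℝ) ≤ hfun ν := le_of_lt (hfun_pos' hν0 hν1)
  have hg : (0:ℝ) ≤ gfun ν := le_of_lt (gfun_pos' hν0 hν1)
  suffices H : ∀ d : ℕ, ∀ k, k ≤ L - 1 → L - 1 - k = d → ∀ (m : ι → ℝ) (a : ι),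
      q k m a ≥ (xi ν hcard m a + Real.exp (minPair ν hcard m / (1 - ν)) * hfun ν
        * ∑ n ∈ Finset.Icc 1 (L - k - 1), gfun ν ^ n) / ∑ l, Real.exp (m l) by
    intro k hk m a
    exact H (L - 1 - k) k hk rfl m a
  intro d
  induction d with
  | zero =>
    intro k hk hd m a
    have hkL : k < L := by omega
    have hk1 : k + 1 = L := by omega
    have hs0 : L - k - 1 = 0 := by omega
    rw [ge_iff_le, hq k hkL m a, hs0]
    have hW : ∀ m' : ι → ℝ,
        (Real.exp ((Finset.univ : Finset ι).sup' (univ_nonempty_of_card hcard) m')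
          + (0:ℝ) * (hfun ν * Real.exp (minPair ν hcard m' / (1 - ν))))
          / (∑ l, Real.exp (m' l))
        ≤ V (k+1) m' := by
      intro m'
      rw [hk1, hVL m', Vterm, exp_sup', zero_mul, add_zero]
    have hb := step_bound hν0 hν1 hcard (V (k+1)) 0 le_rfl m a hW (hint k hkL m a)
    simpa using hb
  | succ d ih =>
    intro k hk hd m a
    have hkL : k < L := by omega
    have hk1 : k + 1 ≤ L - 1 := by omega
    have hk1L : k + 1 < L := by omega
    set c : ℝ := 1 + ∑ n ∈ Finset.Icc 1 (L - (k+1) - 1), gfun ν ^ n with hcdef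
    have hsum0 : 0 ≤ ∑ n ∈ Finset.Icc 1 (L - (k+1) - 1), gfun ν ^ n :=
      Finset.sum_nonneg fun n _ => pow_nonneg hg n
    have hc : 0 ≤ c := by rw [hcdef]; linarith
    have hW : ∀ m' : ι → ℝ,
        (Real.exp ((Finset.univ : Finset ι).sup' (univ_nonempty_of_card hcard) m')
          + c * (hfun ν * Real.exp (minPair ν hcard m' / (1 - ν))))
          / (∑ l, Real.exp (m' l))
        ≤ V (k+1) m' := by
      intro m'
      have hS' : 0 < ∑ l, Real.exp (m' l) := sum_exp_pos m' hcard
      obtain ⟨a', ha'⟩ := exists_xi_ge hcard m' hh h1ν hlog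
      have hq' := ih (k+1) hk1 (by omega) m' a'
      have hle : q (k+1) m' a' ≤ V (k+1) m' := by
        rw [hV (k+1) hk1L m']
        exact Finset.le_sup' _ (Finset.mem_univ a')
      refine le_trans ?_ (le_trans hq'.le hle)
      apply div_le_div_of_nonneg_right ?_ hS'.le
      rw [hcdef]
      nlinarith [ha', mul_nonneg (mul_nonneg hsum0 hh)
        (Real.exp_pos (minPair ν hcard m' / (1 - ν))).le]
    have hb := step_bound hν0 hν1 hcard (V (k+1)) c hc m a hW (hint k hkL m a)
    rw [ge_iff_le, hq k hkL m a]
    refine le_trans (le_of_eq ?_) hb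
    have hN : L - k - 1 = (L - (k+1) - 1) + 1 := by omega
    rw [hN, geom_rec, ← hcdef]
    ring

end
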